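/- Let C be an N×M and D an M×N matrix with nonnegative integer entries, and set A = CD, B = DC. Define h : X̄_A → X̄_B by h((c_n, d_n)_{n∈ℤ}) = ((d_n, c_{n+1}))_{n∈ℤ}. Then h is a well-defined homeomorphism of the two-sided shift spaces satisfying h ∘ σ̄_A = σ̄_B ∘ h. In particular, if A and B are elementary equivalent nonnegative integer matrices, then the two-sided topological Markov shifts (X̄_A, σ̄_A) and (X̄_B, σ̄_B) are topologically conjugate. -/

import Mathlib

open Matrix

/-- The edge set of the directed graph of a rectangular matrix `C` with nonnegative integer
entries: there are `C i j` edges from vertex `i` to vertex `j`. -/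
def Edge {N M : ℕ} (C : Matrix (Fin N) (Fin M) ℕ) : Type :=
  Σ i : Fin N, Σ j : Fin M, Fin (C i j)

instance {N M : ℕ} (C : Matrix (Fin N) (Fin M) ℕ) : Fintype (Edge C) := by
  unfold Edge; haveI : ∀ i : Fin N, Fintype (Σ j : Fin M, Fin (C i j)) := fun i => inferInstance; infer_instance

instance {N M : ℕ} (C : Matrix (Fin N) (Fin M) ℕ) : DecidableEq (Edge C) := by
  unfold Edge; infer_instance

/-- The source vertex of an edge. -/
def Edge.src {N M : ℕ} {C : Matrix (Fin N) (Fin M) ℕ} (e : Edge C) : Fin N := e.1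

/-- The target vertex of an edge. -/
def Edge.tar {N M : ℕ} {C : Matrix (Fin N) (Fin M) ℕ} (e : Edge C) : Fin M := e.2.1

/-- The edge set of `A = CD`, realized as composable pairs `(c, d)` of edges of `C` and `D`. -/
def PairEdgeA {N M : ℕ} (C : Matrix (Fin N) (Fin M) ℕ) (D : Matrix (Fin M) (Fin N) ℕ) :
    Type :=
  {p : Edge C × Edge D // p.1.tar = p.2.src}

/-- The edge set of `B = DC`, realized as composable pairs `(d, c)` of edges of `D` and `C`. -/
def PairEdgeB {N M : ℕ} (C : Matrix (Fin N) (Fin M) ℕ) (D : Matrix (Fin M) (Fin N) ℕ) :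
    Type :=
  {p : Edge D × Edge C // p.1.tar = p.2.src}

instance {N M : ℕ} (C : Matrix (Fin N) (Fin M) ℕ) (D : Matrix (Fin M) (Fin N) ℕ) :
    Fintype (PairEdgeA C D) := by unfold PairEdgeA; infer_instance

instance {N M : ℕ} (C : Matrix (Fin N) (Fin M) ℕ) (D : Matrix (Fin M) (Fin N) ℕ) :
    Fintype (PairEdgeB C D) := by unfold PairEdgeB; infer_instance

instance {N M : ℕ} (C : Matrix (Fin N) (Fin M) ℕ) (D : Matrix (Fin M) (Fin N) ℕ) :
    DecidableEq (PairEdgeA C D) := by unfold PairEdgeA; infer_instance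

instance {N M : ℕ} (C : Matrix (Fin N) (Fin M) ℕ) (D : Matrix (Fin M) (Fin N) ℕ) :
    DecidableEq (PairEdgeB C D) := by unfold PairEdgeB; infer_instance

instance {N M : ℕ} (C : Matrix (Fin N) (Fin M) ℕ) (D : Matrix (Fin M) (Fin N) ℕ) :
    TopologicalSpace (PairEdgeA C D) := ⊥

instance {N M : ℕ} (C : Matrix (Fin N) (Fin M) ℕ) (D : Matrix (Fin M) (Fin N) ℕ) :
    DiscreteTopology (PairEdgeA C D) := ⟨rfl⟩

instance {N M : ℕ} (C : Matrix (Fin N) (Fin M) ℕ) (D : Matrix (Fin M) (Fin N) ℕ) :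
    TopologicalSpace (PairEdgeB C D) := ⊥

instance {N M : ℕ} (C : Matrix (Fin N) (Fin M) ℕ) (D : Matrix (Fin M) (Fin N) ℕ) :
    DiscreteTopology (PairEdgeB C D) := ⟨rfl⟩

/-- The two-sided topological Markov shift space `X̄_A` for `A = CD`, realized on the pair
edge set `E_A`, with the topology induced from the product topology. -/
abbrev XbarA {N M : ℕ} (C : Matrix (Fin N) (Fin M) ℕ) (D : Matrix (Fin M) (Fin N) ℕ) :
    Type :=
  {x : ℤ → PairEdgeA C D // ∀ n, (x n).val.2.tar = (x (n + 1)).val.1.src}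

/-- The two-sided topological Markov shift space `X̄_B` for `B = DC`, realized on the pair
edge set `E_B`, with the topology induced from the product topology. -/
abbrev XbarB {N M : ℕ} (C : Matrix (Fin N) (Fin M) ℕ) (D : Matrix (Fin M) (Fin N) ℕ) :
    Type :=
  {y : ℤ → PairEdgeB C D // ∀ n, (y n).val.2.tar = (y (n + 1)).val.1.src}

/-- The shift homeomorphism `σ̄_A` on `X̄_A` (as a map). -/
def shiftbarA {N M : ℕ} (C : Matrix (Fin N) (Fin M) ℕ) (D : Matrix (Fin M) (Fin N) ℕ)
    (x : XbarA C D) : XbarA C D :=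
  ⟨fun n => x.val (n + 1), fun n => x.prop (n + 1)⟩

/-- The shift homeomorphism `σ̄_B` on `X̄_B` (as a map). -/
def shiftbarB {N M : ℕ} (C : Matrix (Fin N) (Fin M) ℕ) (D : Matrix (Fin M) (Fin N) ℕ)
    (y : XbarB C D) : XbarB C D :=
  ⟨fun n => y.val (n + 1), fun n => y.prop (n + 1)⟩

section Aux

variable {N M : ℕ} (C : Matrix (Fin N) (Fin M) ℕ) (D : Matrix (Fin M) (Fin N) ℕ)


instance : TopologicalSpace {p : Edge C × Edge D // p.1.tar = p.2.src} :=
  inferInstanceAs (TopologicalSpace (PairEdgeA C D))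

instance : DiscreteTopology {p : Edge C × Edge D // p.1.tar = p.2.src} :=
  inferInstanceAs (DiscreteTopology (PairEdgeA C D))

instance : TopologicalSpace {p : Edge D × Edge C // p.1.tar = p.2.src} :=
  inferInstanceAs (TopologicalSpace (PairEdgeB C D))

instance : DiscreteTopology {p : Edge D × Edge C // p.1.tar = p.2.src} :=
  inferInstanceAs (DiscreteTopology (PairEdgeB C D))

/-- Forward map `h`. -/
def hFwd (x : XbarA C D) : XbarB C D :=
  ⟨fun n => ⟨((x.val n).val.2, (x.val (n + 1)).val.1), x.prop n⟩,
   fun n => (x.val (n + 1)).prop⟩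

/-- Inverse map. -/
def hInv (y : XbarB C D) : XbarA C D :=
  ⟨fun n => ⟨((y.val (n - 1)).val.2, (y.val n).val.1), by
      have := y.prop (n - 1); rwa [sub_add_cancel] at this⟩,
   fun n => by simpa using (y.val n).prop⟩

lemma hFwd_cont : Continuous (hFwd C D) := by
  refine Continuous.subtype_mk ?_ _
  show Continuous fun x : XbarA C D => (hFwd C D x).val
  apply continuous_pi
  intro n
  have h1 : Continuous (fun x : XbarA C D =>
      (⟨(x.val n, x.val (n + 1)), x.prop n⟩ :
        {p : PairEdgeA C D × PairEdgeA C D // p.1.val.2.tar = p.2.val.1.src})) :=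
    Continuous.subtype_mk
      (((continuous_apply n).comp continuous_subtype_val).prodMk
        ((continuous_apply (n + 1)).comp continuous_subtype_val)) _
  exact (continuous_of_discreteTopology
    (f := fun p : {p : PairEdgeA C D × PairEdgeA C D // p.1.val.2.tar = p.2.val.1.src} =>
      (⟨(p.val.1.val.2, p.val.2.val.1), p.prop⟩ : PairEdgeB C D))).comp h1

lemma hInv_cont : Continuous (hInv C D) := by
  refine Continuous.subtype_mk ?_ _
  show Continuous fun y : XbarB C D => (hInv C D y).val
  apply continuous_pi
  intro n
  have h1 : Continuous (fun y : XbarB C D =>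
      (⟨(y.val (n - 1), y.val n), by
          have := y.prop (n - 1); rwa [sub_add_cancel] at this⟩ :
        {p : PairEdgeB C D × PairEdgeB C D // p.1.val.2.tar = p.2.val.1.src})) :=
    Continuous.subtype_mk
      (((continuous_apply (n - 1)).comp continuous_subtype_val).prodMk
        ((continuous_apply n).comp continuous_subtype_val)) _
  exact (continuous_of_discreteTopology
    (f := fun p : {p : PairEdgeB C D × PairEdgeB C D // p.1.val.2.tar = p.2.val.1.src} =>
      (⟨(p.val.1.val.2, p.val.2.val.1), p.prop⟩ : PairEdgeA C D))).comp h1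

lemma hInv_hFwd (x : XbarA C D) : hInv C D (hFwd C D x) = x := by
  apply Subtype.ext
  funext n
  apply Subtype.ext
  simp only [hInv, hFwd, sub_add_cancel]

lemma hFwd_hInv (y : XbarB C D) : hFwd C D (hInv C D y) = y := by
  apply Subtype.ext
  funext n
  apply Subtype.ext
  simp only [hInv, hFwd, add_sub_cancel_right]

end Aux

/-- Let `C`, `D` be rectangular nonnegative integer matrices, `A = CD`,
`B = DC`.  The map `h : X̄_A → X̄_B`, `h((c_n,d_n)_{n∈ℤ}) = ((d_n,c_{n+1}))_{n∈ℤ}`, is a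
well-defined homeomorphism of the two-sided shift spaces satisfying `h ∘ σ̄_A = σ̄_B ∘ h`.
In particular, the two-sided topological Markov shifts of elementary equivalent nonnegative
integer matrices are topologically conjugate. -/
theorem stmt_13 (N M : ℕ) (C : Matrix (Fin N) (Fin M) ℕ) (D : Matrix (Fin M) (Fin N) ℕ) :
    ∃ h : XbarA C D ≃ₜ XbarB C D,
      (∀ (x : XbarA C D) (n : ℤ),
        ((h x).val n).val.1 = (x.val n).val.2 ∧
        ((h x).val n).val.2 = (x.val (n + 1)).val.1) ∧
      (∀ x : XbarA C D, h (shiftbarA C D x) = shiftbarB C D (h x)) :=  by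
  refine ⟨⟨⟨hFwd C D, hInv C D, hInv_hFwd C D, hFwd_hInv C D⟩,
    hFwd_cont C D, hInv_cont C D⟩, ?_, ?_⟩
  · intro x n; exact ⟨rfl, rfl⟩
  · intro x
    rfl
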